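/- Let X be a smooth cubic surface over a field k with a k-line L and associated conic bundle f : X → P¹. Suppose s is a section of f. Then the 10 lines of X̄ meeting L split into two Galois-invariant sets 𝔏₁ and 𝔏₂ of 5 pairwise skew lines each, obtained by taking in each degenerate fibre the component met (resp. not met) by s, and (𝔏₁ + 𝔏₂)·s = 5 in Pic(X̄). -/

import Mathlib

/-!
Model: the Picard group of a smooth cubic surface over a separably closed
field is identified with `ℤ⁷ = Fin 7 → ℤ` with its standard basis
`λ₀, L₁, …, L₆` (pullback of a line and the six exceptional classes),
intersection form `picInter`, canonical class `KX = -3λ₀ + L₁ + ⋯ + L₆`.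
The classes of the 27 lines are exactly the classes `l` with
`l·l = -1` and `KX·l = -1`.
-/

def picInter (a b : Fin 7 → ℤ) : ℤ := a 0 * b 0 - ∑ i : Fin 6, a i.succ * b i.succ

def KX : Fin 7 → ℤ := ![-3, 1, 1, 1, 1, 1, 1]

def IsLineClass (l : Fin 7 → ℤ) : Prop := picInter l l = -1 ∧ picInter KX l = -1

/-!
Galois model: for a smooth cubic surface `X` over a field `k`, split by a
finite Galois extension with group `G`, the Galois action on the geometric
Picard group is a homomorphism `ρ : G →* AddAut (Fin 7 → ℤ)` preserving the
intersection form, the canonical class and the set of line classes.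
`Pic(X)` is identified with the fixed subgroup `fixedSubgroup ρ`, and the
subgroup `Δ ⊆ Pic(X)` generated by norms (from finite separable extensions)
of lines is `Delta ρ`: the subgroup generated by the Galois-orbit sums
(= norms from the field of definition) of the 27 line classes.
-/

variable {G : Type*} [Group G] [Fintype G]

instance (l : Fin 7 → ℤ) : Decidable (IsLineClass l) :=
  inferInstanceAs (Decidable (_ ∧ _))

lemma picInter_expand (a b : Fin 7 → ℤ) : picInter a b =
    a 0 * b 0 - (a 1 * b 1 + a 2 * b 2 + a 3 * b 3 + a 4 * b 4 + a 5 * b 5 + a 6 * b 6) := by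
  simp [picInter, Fin.sum_univ_six]

lemma int_sq_sub (x : ℤ) : 0 ≤ x * x - x := by
  rcases le_or_gt x 0 with h | h <;> nlinarith

lemma sq_eq_self (x : ℤ) (h : x * x - x = 0) : x = 0 ∨ x = 1 := by
  have h' : x * (x - 1) = 0 := by ring_nf; linarith
  rcases mul_eq_zero.mp h' with h | h <;> omega

def lines27 : Finset (Fin 7 → ℤ) :=
  {![0,1,0,0,0,0,0],
   ![0,0,1,0,0,0,0],
   ![0,0,0,1,0,0,0],
   ![0,0,0,0,1,0,0],
   ![0,0,0,0,0,1,0],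
   ![0,0,0,0,0,0,1],
   ![1,-1,-1,0,0,0,0],
   ![1,-1,0,-1,0,0,0],
   ![1,-1,0,0,-1,0,0],
   ![1,-1,0,0,0,-1,0],
   ![1,-1,0,0,0,0,-1],
   ![1,0,-1,-1,0,0,0],
   ![1,0,-1,0,-1,0,0],
   ![1,0,-1,0,0,-1,0],
   ![1,0,-1,0,0,0,-1],
   ![1,0,0,-1,-1,0,0],
   ![1,0,0,-1,0,-1,0],
   ![1,0,0,-1,0,0,-1],
   ![1,0,0,0,-1,-1,0],
   ![1,0,0,0,-1,0,-1],
   ![1,0,0,0,0,-1,-1],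
   ![2,0,-1,-1,-1,-1,-1],
   ![2,-1,0,-1,-1,-1,-1],
   ![2,-1,-1,0,-1,-1,-1],
   ![2,-1,-1,-1,0,-1,-1],
   ![2,-1,-1,-1,-1,0,-1],
   ![2,-1,-1,-1,-1,-1,0]}

def D (l : Fin 7 → ℤ) : Prop :=
  (l 0 = 0 ∧ l 1 = 1 ∧ l 2 = 0 ∧ l 3 = 0 ∧ l 4 = 0 ∧ l 5 = 0 ∧ l 6 = 0) ∨
  (l 0 = 0 ∧ l 1 = 0 ∧ l 2 = 1 ∧ l 3 = 0 ∧ l 4 = 0 ∧ l 5 = 0 ∧ l 6 = 0) ∨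
  (l 0 = 0 ∧ l 1 = 0 ∧ l 2 = 0 ∧ l 3 = 1 ∧ l 4 = 0 ∧ l 5 = 0 ∧ l 6 = 0) ∨
  (l 0 = 0 ∧ l 1 = 0 ∧ l 2 = 0 ∧ l 3 = 0 ∧ l 4 = 1 ∧ l 5 = 0 ∧ l 6 = 0) ∨
  (l 0 = 0 ∧ l 1 = 0 ∧ l 2 = 0 ∧ l 3 = 0 ∧ l 4 = 0 ∧ l 5 = 1 ∧ l 6 = 0) ∨
  (l 0 = 0 ∧ l 1 = 0 ∧ l 2 = 0 ∧ l 3 = 0 ∧ l 4 = 0 ∧ l 5 = 0 ∧ l 6 = 1) ∨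
  (l 0 = 1 ∧ l 1 = -1 ∧ l 2 = -1 ∧ l 3 = 0 ∧ l 4 = 0 ∧ l 5 = 0 ∧ l 6 = 0) ∨
  (l 0 = 1 ∧ l 1 = -1 ∧ l 2 = 0 ∧ l 3 = -1 ∧ l 4 = 0 ∧ l 5 = 0 ∧ l 6 = 0) ∨
  (l 0 = 1 ∧ l 1 = -1 ∧ l 2 = 0 ∧ l 3 = 0 ∧ l 4 = -1 ∧ l 5 = 0 ∧ l 6 = 0) ∨
  (l 0 = 1 ∧ l 1 = -1 ∧ l 2 = 0 ∧ l 3 = 0 ∧ l 4 = 0 ∧ l 5 = -1 ∧ l 6 = 0) ∨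
  (l 0 = 1 ∧ l 1 = -1 ∧ l 2 = 0 ∧ l 3 = 0 ∧ l 4 = 0 ∧ l 5 = 0 ∧ l 6 = -1) ∨
  (l 0 = 1 ∧ l 1 = 0 ∧ l 2 = -1 ∧ l 3 = -1 ∧ l 4 = 0 ∧ l 5 = 0 ∧ l 6 = 0) ∨
  (l 0 = 1 ∧ l 1 = 0 ∧ l 2 = -1 ∧ l 3 = 0 ∧ l 4 = -1 ∧ l 5 = 0 ∧ l 6 = 0) ∨
  (l 0 = 1 ∧ l 1 = 0 ∧ l 2 = -1 ∧ l 3 = 0 ∧ l 4 = 0 ∧ l 5 = -1 ∧ l 6 = 0) ∨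
  (l 0 = 1 ∧ l 1 = 0 ∧ l 2 = -1 ∧ l 3 = 0 ∧ l 4 = 0 ∧ l 5 = 0 ∧ l 6 = -1) ∨
  (l 0 = 1 ∧ l 1 = 0 ∧ l 2 = 0 ∧ l 3 = -1 ∧ l 4 = -1 ∧ l 5 = 0 ∧ l 6 = 0) ∨
  (l 0 = 1 ∧ l 1 = 0 ∧ l 2 = 0 ∧ l 3 = -1 ∧ l 4 = 0 ∧ l 5 = -1 ∧ l 6 = 0) ∨
  (l 0 = 1 ∧ l 1 = 0 ∧ l 2 = 0 ∧ l 3 = -1 ∧ l 4 = 0 ∧ l 5 = 0 ∧ l 6 = -1) ∨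
  (l 0 = 1 ∧ l 1 = 0 ∧ l 2 = 0 ∧ l 3 = 0 ∧ l 4 = -1 ∧ l 5 = -1 ∧ l 6 = 0) ∨
  (l 0 = 1 ∧ l 1 = 0 ∧ l 2 = 0 ∧ l 3 = 0 ∧ l 4 = -1 ∧ l 5 = 0 ∧ l 6 = -1) ∨
  (l 0 = 1 ∧ l 1 = 0 ∧ l 2 = 0 ∧ l 3 = 0 ∧ l 4 = 0 ∧ l 5 = -1 ∧ l 6 = -1) ∨
  (l 0 = 2 ∧ l 1 = 0 ∧ l 2 = -1 ∧ l 3 = -1 ∧ l 4 = -1 ∧ l 5 = -1 ∧ l 6 = -1) ∨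
  (l 0 = 2 ∧ l 1 = -1 ∧ l 2 = 0 ∧ l 3 = -1 ∧ l 4 = -1 ∧ l 5 = -1 ∧ l 6 = -1) ∨
  (l 0 = 2 ∧ l 1 = -1 ∧ l 2 = -1 ∧ l 3 = 0 ∧ l 4 = -1 ∧ l 5 = -1 ∧ l 6 = -1) ∨
  (l 0 = 2 ∧ l 1 = -1 ∧ l 2 = -1 ∧ l 3 = -1 ∧ l 4 = 0 ∧ l 5 = -1 ∧ l 6 = -1) ∨
  (l 0 = 2 ∧ l 1 = -1 ∧ l 2 = -1 ∧ l 3 = -1 ∧ l 4 = -1 ∧ l 5 = 0 ∧ l 6 = -1) ∨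
  (l 0 = 2 ∧ l 1 = -1 ∧ l 2 = -1 ∧ l 3 = -1 ∧ l 4 = -1 ∧ l 5 = -1 ∧ l 6 = 0)

def nbrs (L : Fin 7 → ℤ) : Finset (Fin 7 → ℤ) :=
  lines27.filter (fun m => ¬ m = L ∧ picInter m L = 1)

lemma lines27_isLine : ∀ l ∈ lines27, IsLineClass l := by decide

lemma count10 : ∀ L ∈ lines27, (nbrs L).card = 10 := by decide

lemma eq_vec_iff (l : Fin 7 → ℤ) (c0 c1 c2 c3 c4 c5 c6 : ℤ) :
    l = ![c0,c1,c2,c3,c4,c5,c6] ↔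
    (l 0 = c0 ∧ l 1 = c1 ∧ l 2 = c2 ∧ l 3 = c3 ∧ l 4 = c4 ∧ l 5 = c5 ∧ l 6 = c6) := by
  constructor
  · rintro rfl; exact ⟨rfl, rfl, rfl, rfl, rfl, rfl, rfl⟩
  · rintro ⟨h0,h1,h2,h3,h4,h5,h6⟩
    funext i; fin_cases i <;> assumption

lemma mem_lines27_iff (l : Fin 7 → ℤ) : l ∈ lines27 ↔ D l := by
  simp only [lines27, D, Finset.mem_insert, Finset.mem_singleton, eq_vec_iff]

set_option maxHeartbeats 1600000 in
lemma classify (l : Fin 7 → ℤ) (h : IsLineClass l) : D l := by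
  obtain ⟨h1, h2⟩ := h
  rw [picInter_expand] at h1 h2
  rw [show KX 0 = -3 from rfl, show KX 1 = 1 from rfl, show KX 2 = 1 from rfl,
      show KX 3 = 1 from rfl, show KX 4 = 1 from rfl, show KX 5 = 1 from rfl,
      show KX 6 = 1 from rfl] at h2
  have hQS : (l 1 + l 2 + l 3 + l 4 + l 5 + l 6) * (l 1 + l 2 + l 3 + l 4 + l 5 + l 6) ≤ 6 * (l 1 * l 1 + l 2 * l 2 + l 3 * l 3 + l 4 * l 4 + l 5 * l 5 + l 6 * l 6) := by
    linarith [sq_nonneg (l 1 - l 2), sq_nonneg (l 1 - l 3), sq_nonneg (l 1 - l 4), sq_nonneg (l 1 - l 5), sq_nonneg (l 1 - l 6), sq_nonneg (l 2 - l 3), sq_nonneg (l 2 - l 4), sq_nonneg (l 2 - l 5), sq_nonneg (l 2 - l 6), sq_nonneg (l 3 - l 4), sq_nonneg (l 3 - l 5), sq_nonneg (l 3 - l 6), sq_nonneg (l 4 - l 5), sq_nonneg (l 4 - l 6), sq_nonneg (l 5 - l 6)]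
  have hb : 0 ≤ l 0 ∧ l 0 ≤ 2 := by constructor <;> nlinarith [hQS]
  have h0 : l 0 = 0 ∨ l 0 = 1 ∨ l 0 = 2 := by omega
  rcases h0 with h0 | h0 | h0
  · rw [h0] at h1 h2
    have d1 : l 1 = 0 ∨ l 1 = 1 := sq_eq_self _ (by linarith [int_sq_sub (l 1), int_sq_sub (l 2), int_sq_sub (l 3), int_sq_sub (l 4), int_sq_sub (l 5), int_sq_sub (l 6)])
    have d2 : l 2 = 0 ∨ l 2 = 1 := sq_eq_self _ (by linarith [int_sq_sub (l 1), int_sq_sub (l 2), int_sq_sub (l 3), int_sq_sub (l 4), int_sq_sub (l 5), int_sq_sub (l 6)])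
    have d3 : l 3 = 0 ∨ l 3 = 1 := sq_eq_self _ (by linarith [int_sq_sub (l 1), int_sq_sub (l 2), int_sq_sub (l 3), int_sq_sub (l 4), int_sq_sub (l 5), int_sq_sub (l 6)])
    have d4 : l 4 = 0 ∨ l 4 = 1 := sq_eq_self _ (by linarith [int_sq_sub (l 1), int_sq_sub (l 2), int_sq_sub (l 3), int_sq_sub (l 4), int_sq_sub (l 5), int_sq_sub (l 6)])
    have d5 : l 5 = 0 ∨ l 5 = 1 := sq_eq_self _ (by linarith [int_sq_sub (l 1), int_sq_sub (l 2), int_sq_sub (l 3), int_sq_sub (l 4), int_sq_sub (l 5), int_sq_sub (l 6)])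
    have d6 : l 6 = 0 ∨ l 6 = 1 := sq_eq_self _ (by linarith [int_sq_sub (l 1), int_sq_sub (l 2), int_sq_sub (l 3), int_sq_sub (l 4), int_sq_sub (l 5), int_sq_sub (l 6)])
    unfold D; clear h1 hQS hb
    rcases d1 with d1 | d1 <;> rcases d2 with d2 | d2 <;> rcases d3 with d3 | d3 <;>
      rcases d4 with d4 | d4 <;> rcases d5 with d5 | d5 <;> rcases d6 with d6 | d6 <;>
      first
        | (simp [h0, d1, d2, d3, d4, d5, d6]; done)
        | (exfalso; omega)
  · rw [h0] at h1 h2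
    have d1 : l 1 = 0 ∨ l 1 = -1 := by
      rcases sq_eq_self (-(l 1)) (by linarith [int_sq_sub (-(l 1)), int_sq_sub (-(l 2)), int_sq_sub (-(l 3)), int_sq_sub (-(l 4)), int_sq_sub (-(l 5)), int_sq_sub (-(l 6))]) with h | h <;> omega
    have d2 : l 2 = 0 ∨ l 2 = -1 := by
      rcases sq_eq_self (-(l 2)) (by linarith [int_sq_sub (-(l 1)), int_sq_sub (-(l 2)), int_sq_sub (-(l 3)), int_sq_sub (-(l 4)), int_sq_sub (-(l 5)), int_sq_sub (-(l 6))]) with h | h <;> omega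
    have d3 : l 3 = 0 ∨ l 3 = -1 := by
      rcases sq_eq_self (-(l 3)) (by linarith [int_sq_sub (-(l 1)), int_sq_sub (-(l 2)), int_sq_sub (-(l 3)), int_sq_sub (-(l 4)), int_sq_sub (-(l 5)), int_sq_sub (-(l 6))]) with h | h <;> omega
    have d4 : l 4 = 0 ∨ l 4 = -1 := by
      rcases sq_eq_self (-(l 4)) (by linarith [int_sq_sub (-(l 1)), int_sq_sub (-(l 2)), int_sq_sub (-(l 3)), int_sq_sub (-(l 4)), int_sq_sub (-(l 5)), int_sq_sub (-(l 6))]) with h | h <;> omega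
    have d5 : l 5 = 0 ∨ l 5 = -1 := by
      rcases sq_eq_self (-(l 5)) (by linarith [int_sq_sub (-(l 1)), int_sq_sub (-(l 2)), int_sq_sub (-(l 3)), int_sq_sub (-(l 4)), int_sq_sub (-(l 5)), int_sq_sub (-(l 6))]) with h | h <;> omega
    have d6 : l 6 = 0 ∨ l 6 = -1 := by
      rcases sq_eq_self (-(l 6)) (by linarith [int_sq_sub (-(l 1)), int_sq_sub (-(l 2)), int_sq_sub (-(l 3)), int_sq_sub (-(l 4)), int_sq_sub (-(l 5)), int_sq_sub (-(l 6))]) with h | h <;> omega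
    unfold D; clear h1 hQS hb
    rcases d1 with d1 | d1 <;> rcases d2 with d2 | d2 <;> rcases d3 with d3 | d3 <;>
      rcases d4 with d4 | d4 <;> rcases d5 with d5 | d5 <;> rcases d6 with d6 | d6 <;>
      first
        | (simp [h0, d1, d2, d3, d4, d5, d6]; done)
        | (exfalso; omega)
  · rw [h0] at h1 h2
    have d1 : l 1 = 0 ∨ l 1 = -1 := by
      rcases sq_eq_self (-(l 1)) (by linarith [int_sq_sub (-(l 1)), int_sq_sub (-(l 2)), int_sq_sub (-(l 3)), int_sq_sub (-(l 4)), int_sq_sub (-(l 5)), int_sq_sub (-(l 6))]) with h | h <;> omega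
    have d2 : l 2 = 0 ∨ l 2 = -1 := by
      rcases sq_eq_self (-(l 2)) (by linarith [int_sq_sub (-(l 1)), int_sq_sub (-(l 2)), int_sq_sub (-(l 3)), int_sq_sub (-(l 4)), int_sq_sub (-(l 5)), int_sq_sub (-(l 6))]) with h | h <;> omega
    have d3 : l 3 = 0 ∨ l 3 = -1 := by
      rcases sq_eq_self (-(l 3)) (by linarith [int_sq_sub (-(l 1)), int_sq_sub (-(l 2)), int_sq_sub (-(l 3)), int_sq_sub (-(l 4)), int_sq_sub (-(l 5)), int_sq_sub (-(l 6))]) with h | h <;> omega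
    have d4 : l 4 = 0 ∨ l 4 = -1 := by
      rcases sq_eq_self (-(l 4)) (by linarith [int_sq_sub (-(l 1)), int_sq_sub (-(l 2)), int_sq_sub (-(l 3)), int_sq_sub (-(l 4)), int_sq_sub (-(l 5)), int_sq_sub (-(l 6))]) with h | h <;> omega
    have d5 : l 5 = 0 ∨ l 5 = -1 := by
      rcases sq_eq_self (-(l 5)) (by linarith [int_sq_sub (-(l 1)), int_sq_sub (-(l 2)), int_sq_sub (-(l 3)), int_sq_sub (-(l 4)), int_sq_sub (-(l 5)), int_sq_sub (-(l 6))]) with h | h <;> omega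
    have d6 : l 6 = 0 ∨ l 6 = -1 := by
      rcases sq_eq_self (-(l 6)) (by linarith [int_sq_sub (-(l 1)), int_sq_sub (-(l 2)), int_sq_sub (-(l 3)), int_sq_sub (-(l 4)), int_sq_sub (-(l 5)), int_sq_sub (-(l 6))]) with h | h <;> omega
    unfold D; clear h1 hQS hb
    rcases d1 with d1 | d1 <;> rcases d2 with d2 | d2 <;> rcases d3 with d3 | d3 <;>
      rcases d4 with d4 | d4 <;> rcases d5 with d5 | d5 <;> rcases d6 with d6 | d6 <;>
      first
        | (simp [h0, d1, d2, d3, d4, d5, d6]; done)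
        | (exfalso; omega)

lemma isLine_iff_mem (l : Fin 7 → ℤ) : IsLineClass l ↔ l ∈ lines27 :=
  ⟨fun h => (mem_lines27_iff l).mpr (classify l h), fun h => lines27_isLine l h⟩

lemma picInter_comm (a b : Fin 7 → ℤ) : picInter a b = picInter b a := by
  simp only [picInter_expand]; ring

lemma picInter_sub_right (a b c : Fin 7 → ℤ) :
    picInter a (b - c) = picInter a b - picInter a c := by
  simp only [picInter_expand, Pi.sub_apply]; ring

lemma picInter_sub_left (a b c : Fin 7 → ℤ) :
    picInter (a - b) c = picInter a c - picInter b c := by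
  simp only [picInter_expand, Pi.sub_apply]; ring

lemma picInter_neg_right (a b : Fin 7 → ℤ) : picInter a (-b) = -picInter a b := by
  simp only [picInter_expand, Pi.neg_apply]; ring

lemma picInter_neg_left (a b : Fin 7 → ℤ) : picInter (-a) b = -picInter a b := by
  simp only [picInter_expand, Pi.neg_apply]; ring

lemma KX_self : picInter KX KX = 3 := by decide

/-- `K⊥` is negative definite. -/
lemma negdef_le (v : Fin 7 → ℤ) (hKv : picInter KX v = 0) : picInter v v ≤ 0 := by
  rw [picInter_expand] at hKv ⊢
  rw [show KX 0 = -3 from rfl, show KX 1 = 1 from rfl, show KX 2 = 1 from rfl,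
      show KX 3 = 1 from rfl, show KX 4 = 1 from rfl, show KX 5 = 1 from rfl,
      show KX 6 = 1 from rfl] at hKv
  have hQS : (v 1 + v 2 + v 3 + v 4 + v 5 + v 6) * (v 1 + v 2 + v 3 + v 4 + v 5 + v 6) ≤ 6 * (v 1 * v 1 + v 2 * v 2 + v 3 * v 3 + v 4 * v 4 + v 5 * v 5 + v 6 * v 6) := by
    linarith [sq_nonneg (v 1 - v 2), sq_nonneg (v 1 - v 3), sq_nonneg (v 1 - v 4), sq_nonneg (v 1 - v 5), sq_nonneg (v 1 - v 6), sq_nonneg (v 2 - v 3), sq_nonneg (v 2 - v 4), sq_nonneg (v 2 - v 5), sq_nonneg (v 2 - v 6), sq_nonneg (v 3 - v 4), sq_nonneg (v 3 - v 5), sq_nonneg (v 3 - v 6), sq_nonneg (v 4 - v 5), sq_nonneg (v 4 - v 6), sq_nonneg (v 5 - v 6)]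
  have hS : v 1 + v 2 + v 3 + v 4 + v 5 + v 6 = -3 * v 0 := by linarith
  have h9 : (v 1 + v 2 + v 3 + v 4 + v 5 + v 6) * (v 1 + v 2 + v 3 + v 4 + v 5 + v 6) = 9 * (v 0 * v 0) := by rw [hS]; ring
  linarith [hQS, h9, mul_self_nonneg (v 0)]

lemma negdef_eq (v : Fin 7 → ℤ) (hKv : picInter KX v = 0)
    (hvv : picInter v v = 0) : v = 0 := by
  rw [picInter_expand] at hKv hvv
  rw [show KX 0 = -3 from rfl, show KX 1 = 1 from rfl, show KX 2 = 1 from rfl,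
      show KX 3 = 1 from rfl, show KX 4 = 1 from rfl, show KX 5 = 1 from rfl,
      show KX 6 = 1 from rfl] at hKv
  have hQS : (v 1 + v 2 + v 3 + v 4 + v 5 + v 6) * (v 1 + v 2 + v 3 + v 4 + v 5 + v 6) ≤ 6 * (v 1 * v 1 + v 2 * v 2 + v 3 * v 3 + v 4 * v 4 + v 5 * v 5 + v 6 * v 6) := by
    linarith [sq_nonneg (v 1 - v 2), sq_nonneg (v 1 - v 3), sq_nonneg (v 1 - v 4), sq_nonneg (v 1 - v 5), sq_nonneg (v 1 - v 6), sq_nonneg (v 2 - v 3), sq_nonneg (v 2 - v 4), sq_nonneg (v 2 - v 5), sq_nonneg (v 2 - v 6), sq_nonneg (v 3 - v 4), sq_nonneg (v 3 - v 5), sq_nonneg (v 3 - v 6), sq_nonneg (v 4 - v 5), sq_nonneg (v 4 - v 6), sq_nonneg (v 5 - v 6)]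
  have hS : v 1 + v 2 + v 3 + v 4 + v 5 + v 6 = -3 * v 0 := by linarith
  have h9 : (v 1 + v 2 + v 3 + v 4 + v 5 + v 6) * (v 1 + v 2 + v 3 + v 4 + v 5 + v 6) = 9 * (v 0 * v 0) := by rw [hS]; ring
  have h00 : v 0 = 0 := mul_self_eq_zero.mp (by linarith [hQS, h9, mul_self_nonneg (v 0)])
  have h000 : v 0 * v 0 = 0 := mul_self_eq_zero.mpr h00
  have hQ0 : v 1 * v 1 + v 2 * v 2 + v 3 * v 3 + v 4 * v 4 + v 5 * v 5 + v 6 * v 6 = 0 := by linarith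
  have e1 : v 1 = 0 := mul_self_eq_zero.mp (by linarith [mul_self_nonneg (v 1), mul_self_nonneg (v 2), mul_self_nonneg (v 3), mul_self_nonneg (v 4), mul_self_nonneg (v 5), mul_self_nonneg (v 6)])
  have e2 : v 2 = 0 := mul_self_eq_zero.mp (by linarith [mul_self_nonneg (v 1), mul_self_nonneg (v 2), mul_self_nonneg (v 3), mul_self_nonneg (v 4), mul_self_nonneg (v 5), mul_self_nonneg (v 6)])
  have e3 : v 3 = 0 := mul_self_eq_zero.mp (by linarith [mul_self_nonneg (v 1), mul_self_nonneg (v 2), mul_self_nonneg (v 3), mul_self_nonneg (v 4), mul_self_nonneg (v 5), mul_self_nonneg (v 6)])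
  have e4 : v 4 = 0 := mul_self_eq_zero.mp (by linarith [mul_self_nonneg (v 1), mul_self_nonneg (v 2), mul_self_nonneg (v 3), mul_self_nonneg (v 4), mul_self_nonneg (v 5), mul_self_nonneg (v 6)])
  have e5 : v 5 = 0 := mul_self_eq_zero.mp (by linarith [mul_self_nonneg (v 1), mul_self_nonneg (v 2), mul_self_nonneg (v 3), mul_self_nonneg (v 4), mul_self_nonneg (v 5), mul_self_nonneg (v 6)])
  have e6 : v 6 = 0 := mul_self_eq_zero.mp (by linarith [mul_self_nonneg (v 1), mul_self_nonneg (v 2), mul_self_nonneg (v 3), mul_self_nonneg (v 4), mul_self_nonneg (v 5), mul_self_nonneg (v 6)])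
  funext i
  fin_cases i
  · exact h00
  · exact e1
  · exact e2
  · exact e3
  · exact e4
  · exact e5
  · exact e6


noncomputable def normOrbit (ρ : G →* Multiplicative (AddAut (Fin 7 → ℤ))) (l : Fin 7 → ℤ) : Fin 7 → ℤ :=
  ∑ m ∈ Finset.image (fun g => (ρ g).toAdd l) Finset.univ, m

noncomputable def Delta (ρ : G →* Multiplicative (AddAut (Fin 7 → ℤ))) : AddSubgroup (Fin 7 → ℤ) :=
  AddSubgroup.closure { x | ∃ l, IsLineClass l ∧ x = normOrbit ρ l }

def fixedSubgroup (ρ : G →* Multiplicative (AddAut (Fin 7 → ℤ))) : AddSubgroup (Fin 7 → ℤ) where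
  carrier := {x | ∀ g, (ρ g).toAdd x = x}
  zero_mem' := fun g => map_zero (ρ g).toAdd
  add_mem' := fun {a b} ha hb g => by rw [map_add, ha g, hb g]
  neg_mem' := fun {a} ha g => by rw [map_neg, ha g]

set_option maxHeartbeats 1600000 in
/-- Let `L` be a `k`-line on a smooth cubic surface with conic bundle
`f : X → ℙ¹` (fibre class `F = -KX - L`) and let `s` be the class of a
section of `f` (so `s·F = 1` and `s` meets every line of a degenerate fibre
non-negatively).  The 10 lines of `X̄` meeting `L` split into the two
Galois-stable sets `𝔏₁` (components met by `s`) and `𝔏₂` (components not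
met by `s`), each consisting of 5 pairwise skew lines, and
`(𝔏₁ + 𝔏₂)·s = 5`. -/
theorem stmt7
    (ρ : G →* Multiplicative (AddAut (Fin 7 → ℤ)))
    (hlines : ∀ (g : G) (l : Fin 7 → ℤ), IsLineClass l → IsLineClass ((ρ g).toAdd l))
    (hint : ∀ (g : G) (a b : Fin 7 → ℤ), picInter ((ρ g).toAdd a) ((ρ g).toAdd b) = picInter a b)
    (hK : ∀ g : G, (ρ g).toAdd KX = KX)
    (L : Fin 7 → ℤ) (hL : IsLineClass L) (hLfix : ∀ g : G, (ρ g).toAdd L = L)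
    (s : Fin 7 → ℤ) (hsfix : ∀ g : G, (ρ g).toAdd s = s)
    (hsF : picInter s (-KX - L) = 1)
    (hsnn : ∀ m, IsLineClass m → picInter m L = 1 → 0 ≤ picInter s m) :
    (Set.ncard {m : Fin 7 → ℤ | IsLineClass m ∧ m ≠ L ∧ picInter m L = 1} = 10) ∧
    ({m : Fin 7 → ℤ | IsLineClass m ∧ m ≠ L ∧ picInter m L = 1} =
      {m | (IsLineClass m ∧ m ≠ L ∧ picInter m L = 1) ∧ 0 < picInter s m} ∪
      {m | (IsLineClass m ∧ m ≠ L ∧ picInter m L = 1) ∧ picInter s m = 0}) ∧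
    (Set.ncard {m : Fin 7 → ℤ | (IsLineClass m ∧ m ≠ L ∧ picInter m L = 1) ∧
        0 < picInter s m} = 5) ∧
    (Set.ncard {m : Fin 7 → ℤ | (IsLineClass m ∧ m ≠ L ∧ picInter m L = 1) ∧
        picInter s m = 0} = 5) ∧
    (∀ g : G, (fun m => (ρ g).toAdd m) '' {m : Fin 7 → ℤ |
        (IsLineClass m ∧ m ≠ L ∧ picInter m L = 1) ∧ 0 < picInter s m} =
        {m | (IsLineClass m ∧ m ≠ L ∧ picInter m L = 1) ∧ 0 < picInter s m}) ∧
    (∀ g : G, (fun m => (ρ g).toAdd m) '' {m : Fin 7 → ℤ |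
        (IsLineClass m ∧ m ≠ L ∧ picInter m L = 1) ∧ picInter s m = 0} =
        {m | (IsLineClass m ∧ m ≠ L ∧ picInter m L = 1) ∧ picInter s m = 0}) ∧
    (∀ m m', ((IsLineClass m ∧ m ≠ L ∧ picInter m L = 1) ∧ 0 < picInter s m) →
        ((IsLineClass m' ∧ m' ≠ L ∧ picInter m' L = 1) ∧ 0 < picInter s m') →
        m ≠ m' → picInter m m' = 0) ∧
    (∀ m m', ((IsLineClass m ∧ m ≠ L ∧ picInter m L = 1) ∧ picInter s m = 0) →
        ((IsLineClass m' ∧ m' ≠ L ∧ picInter m' L = 1) ∧ picInter s m' = 0) →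
        m ≠ m' → picInter m m' = 0) ∧
    (∑ᶠ m ∈ {m : Fin 7 → ℤ | IsLineClass m ∧ m ≠ L ∧ picInter m L = 1},
        picInter m s) = 5 := by
  classical
  obtain ⟨hLL, hKL⟩ := hL
  have hLK : picInter L KX = -1 := by rw [picInter_comm]; exact hKL
  have hKK : picInter KX KX = 3 := KX_self
  have hsF' : -picInter s KX - picInter s L = 1 := by
    rw [picInter_sub_right, picInter_neg_right] at hsF; linarith
  -- the pairing involution
  have hiota : ∀ m, IsLineClass m → m ≠ L → picInter m L = 1 →
      ((IsLineClass (-KX - L - m) ∧ (-KX - L - m) ≠ L ∧ picInter (-KX - L - m) L = 1) ∧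
        picInter s m + picInter s (-KX - L - m) = 1 ∧ (-KX - L - m) ≠ m) := by
    rintro m ⟨hmm, hKm⟩ hne hmL
    have hmK : picInter m KX = -1 := by rw [picInter_comm]; exact hKm
    have hLm : picInter L m = 1 := by rw [picInter_comm]; exact hmL
    refine ⟨⟨⟨?_, ?_⟩, ?_, ?_⟩, ?_, ?_⟩
    · simp only [picInter_sub_left, picInter_sub_right, picInter_neg_left, picInter_neg_right]
      linarith [hKK, hKL, hLK, hLL, hKm, hmK, hLm, hmL, hmm]
    · simp only [picInter_sub_right, picInter_neg_right]
      linarith [hKK, hKL, hKm]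
    · intro h
      have h2 := congrArg (fun x => picInter L x) h
      simp only [picInter_sub_right, picInter_neg_right] at h2
      linarith [hLK, hLL, hLm]
    · simp only [picInter_sub_left, picInter_neg_left]
      linarith [hKL, hLL, hmL]
    · simp only [picInter_sub_right, picInter_neg_right]
      linarith [hsF']
    · intro h
      have h2 := congrArg (fun x => picInter m x) h
      simp only [picInter_sub_right, picInter_neg_right] at h2
      linarith [hmK, hmL, hmm]
  have hval : ∀ m, IsLineClass m → m ≠ L → picInter m L = 1 →
      picInter s m = 0 ∨ picInter s m = 1 := by
    intro m h1 h2 h3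
    obtain ⟨⟨hi1, hi2, hi3⟩, hpair, _⟩ := hiota m h1 h2 h3
    have a1 := hsnn m h1 h3
    have a2 := hsnn _ hi1 hi3
    omega
  -- skewness
  have hskew : ∀ m m', (IsLineClass m ∧ m ≠ L ∧ picInter m L = 1) →
      (IsLineClass m' ∧ m' ≠ L ∧ picInter m' L = 1) → m ≠ m' →
      m' ≠ -KX - L - m → picInter m m' = 0 := by
    rintro m m' ⟨⟨hmm, hKm⟩, hne, hmL⟩ ⟨⟨hm'm', hKm'⟩, hne', hm'L⟩ hne2 hne3
    have hmK : picInter m KX = -1 := by rw [picInter_comm]; exact hKm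
    have hm'K : picInter m' KX = -1 := by rw [picInter_comm]; exact hKm'
    have hLm : picInter L m = 1 := by rw [picInter_comm]; exact hmL
    have hLm' : picInter L m' = 1 := by rw [picInter_comm]; exact hm'L
    have hcm : picInter m' m = picInter m m' := picInter_comm _ _
    -- lower bound
    have hKv : picInter KX (m - m') = 0 := by
      rw [picInter_sub_right, hKm, hKm']; ring
    have hv := negdef_le _ hKv
    simp only [picInter_sub_left, picInter_sub_right] at hv
    have hlow : -1 ≤ picInter m m' := by linarith [hmm, hm'm', hcm]
    have hnotm1 : picInter m m' ≠ -1 := by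
      intro h
      have h0 : picInter (m - m') (m - m') = 0 := by
        simp only [picInter_sub_left, picInter_sub_right]
        linarith [hmm, hm'm', hcm]
      have := negdef_eq _ hKv h0
      exact hne2 (sub_eq_zero.mp this)
    -- upper bound
    have hKw : picInter KX (-KX - L - m - m') = 0 := by
      simp only [picInter_sub_right, picInter_neg_right]
      linarith [hKK, hKL, hKm, hKm']
    have hw := negdef_le _ hKw
    simp only [picInter_sub_left, picInter_sub_right, picInter_neg_left,
      picInter_neg_right] at hw
    have hhigh : picInter m m' ≤ 1 := by
      linarith [hKK, hKL, hLK, hLL, hKm, hmK, hKm', hm'K, hLm, hmL, hLm', hm'L,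
        hmm, hm'm', hcm]
    have hnot1 : picInter m m' ≠ 1 := by
      intro h
      have h0 : picInter (-KX - L - m - m') (-KX - L - m - m') = 0 := by
        simp only [picInter_sub_left, picInter_sub_right, picInter_neg_left,
          picInter_neg_right]
        linarith [hKK, hKL, hLK, hLL, hKm, hmK, hKm', hm'K, hLm, hmL, hLm', hm'L,
          hmm, hm'm', hcm]
      have := negdef_eq _ hKw h0
      exact hne3 (sub_eq_zero.mp this).symm
    omega
  -- base set membership
  have hbase : ∀ m : Fin 7 → ℤ, (IsLineClass m ∧ m ≠ L ∧ picInter m L = 1) ↔ m ∈ nbrs L := by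
    intro m
    rw [nbrs, Finset.mem_filter]
    constructor
    · rintro ⟨a, b, c⟩; exact ⟨(isLine_iff_mem m).mp a, b, c⟩
    · rintro ⟨a, b, c⟩; exact ⟨(isLine_iff_mem m).mpr a, b, c⟩
  have hNset : {m : Fin 7 → ℤ | IsLineClass m ∧ m ≠ L ∧ picInter m L = 1} = ↑(nbrs L) := by
    ext m; rw [Set.mem_setOf_eq, hbase m, Finset.mem_coe]
  have hcard10 : (nbrs L).card = 10 := count10 L ((isLine_iff_mem L).mp ⟨hLL, hKL⟩)
  -- positive / zero parts as finsets
  have hPset : {m : Fin 7 → ℤ | (IsLineClass m ∧ m ≠ L ∧ picInter m L = 1) ∧ 0 < picInter s m}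
      = ↑((nbrs L).filter (fun m => 0 < picInter s m)) := by
    ext m
    rw [Set.mem_setOf_eq, Finset.mem_coe, Finset.mem_filter, hbase m]
  have hZset : {m : Fin 7 → ℤ | (IsLineClass m ∧ m ≠ L ∧ picInter m L = 1) ∧ picInter s m = 0}
      = ↑((nbrs L).filter (fun m => picInter s m = 0)) := by
    ext m
    rw [Set.mem_setOf_eq, Finset.mem_coe, Finset.mem_filter, hbase m]
  -- the two filters have equal card, summing to 10
  have hcardeq : ((nbrs L).filter (fun m => 0 < picInter s m)).card =
      ((nbrs L).filter (fun m => picInter s m = 0)).card := by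
    apply Finset.card_bij (fun m _ => -KX - L - m)
    · intro m hm
      rw [Finset.mem_filter] at hm
      obtain ⟨hm1, hm2⟩ := hm
      obtain ⟨hb1, hb2, hb3⟩ := (hbase m).mpr hm1
      obtain ⟨⟨hi1, hi2, hi3⟩, hpair, _⟩ := hiota m hb1 hb2 hb3
      rw [Finset.mem_filter]
      refine ⟨(hbase _).mp ⟨hi1, hi2, hi3⟩, ?_⟩
      rcases hval m hb1 hb2 hb3 with h | h
      · omega
      · omega
    · intro a ha b hb h
      have := congrFun h
      funext i
      have h2 := this i
      simp only [Pi.sub_apply, Pi.neg_apply] at h2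
      linarith
    · intro z hz
      rw [Finset.mem_filter] at hz
      obtain ⟨hz1, hz2⟩ := hz
      obtain ⟨hb1, hb2, hb3⟩ := (hbase z).mpr hz1
      obtain ⟨⟨hi1, hi2, hi3⟩, hpair, _⟩ := hiota z hb1 hb2 hb3
      refine ⟨-KX - L - z, ?_, ?_⟩
      · rw [Finset.mem_filter]
        refine ⟨(hbase _).mp ⟨hi1, hi2, hi3⟩, by omega⟩
      · funext i; simp only [Pi.sub_apply, Pi.neg_apply]; ring
  have hext : ∀ m ∈ nbrs L, (picInter s m = 0 ↔ ¬ 0 < picInter s m) := by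
    intro m hm
    obtain ⟨hb1, hb2, hb3⟩ := (hbase m).mpr hm
    have := hsnn m hb1 hb3
    omega
  have hcardsum : ((nbrs L).filter (fun m => 0 < picInter s m)).card +
      ((nbrs L).filter (fun m => picInter s m = 0)).card = 10 := by
    rw [Finset.filter_congr hext, Finset.card_filter_add_card_filter_not, hcard10]
  have hP5 : ((nbrs L).filter (fun m => 0 < picInter s m)).card = 5 := by omega
  have hZ5 : ((nbrs L).filter (fun m => picInter s m = 0)).card = 5 := by omega
  -- Galois stability helper
  have hinv : ∀ (g : G) (x : Fin 7 → ℤ), (ρ g⁻¹).toAdd ((ρ g).toAdd x) = x := by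
    intro g x
    rw [map_inv, toAdd_inv]; exact AddAut.neg_apply_self _ _ x
  have hmono : ∀ (Q : ℤ → Prop) (g : G) (m : Fin 7 → ℤ),
      ((IsLineClass m ∧ m ≠ L ∧ picInter m L = 1) ∧ Q (picInter s m)) →
      ((IsLineClass ((ρ g).toAdd m) ∧ (ρ g).toAdd m ≠ L ∧ picInter ((ρ g).toAdd m) L = 1) ∧ Q (picInter s ((ρ g).toAdd m))) := by
    rintro Q g m ⟨⟨hm1, hm2, hm3⟩, hm4⟩
    have hsm : picInter s ((ρ g).toAdd m) = picInter s m := by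
      conv_lhs => rw [← hsfix g]
      rw [hint]
    refine ⟨⟨hlines g m hm1, ?_, ?_⟩, ?_⟩
    · intro he
      apply hm2
      rw [← hinv g m, he, hLfix]
    · rw [← hLfix g, hint]; exact hm3
    · rw [hsm]; exact hm4
  have himg : ∀ (Q : ℤ → Prop) (g : G),
      (fun m => (ρ g).toAdd m) '' {m : Fin 7 → ℤ |
        (IsLineClass m ∧ m ≠ L ∧ picInter m L = 1) ∧ Q (picInter s m)} =
      {m | (IsLineClass m ∧ m ≠ L ∧ picInter m L = 1) ∧ Q (picInter s m)} := by
    intro Q g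
    ext x
    constructor
    · rintro ⟨m, hm, rfl⟩
      exact hmono Q g m hm
    · intro hx
      refine ⟨(ρ g⁻¹).toAdd x, hmono Q g⁻¹ x hx, ?_⟩
      have := hinv g⁻¹ x
      rwa [inv_inv] at this
  refine ⟨?_, ?_, ?_, ?_, ?_, ?_, ?_, ?_, ?_⟩
  · rw [hNset, Set.ncard_coe_finset, hcard10]
  · ext m
    simp only [Set.mem_setOf_eq, Set.mem_union]
    constructor
    · rintro ⟨h1, h2, h3⟩
      rcases hval m h1 h2 h3 with h | h
      · exact Or.inr ⟨⟨h1, h2, h3⟩, h⟩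
      · exact Or.inl ⟨⟨h1, h2, h3⟩, by omega⟩
    · rintro (⟨h, _⟩ | ⟨h, _⟩) <;> exact h
  · rw [hPset, Set.ncard_coe_finset, hP5]
  · rw [hZset, Set.ncard_coe_finset, hZ5]
  · exact himg (fun t => 0 < t)
  · exact himg (fun t => t = 0)
  · rintro m m' ⟨hm, hm2⟩ ⟨hm', hm2'⟩ hne
    apply hskew m m' hm hm' hne
    intro he
    obtain ⟨_, hpair, _⟩ := hiota m hm.1 hm.2.1 hm.2.2
    rw [← he] at hpair
    omega
  · rintro m m' ⟨hm, hm2⟩ ⟨hm', hm2'⟩ hne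
    apply hskew m m' hm hm' hne
    intro he
    obtain ⟨_, hpair, _⟩ := hiota m hm.1 hm.2.1 hm.2.2
    rw [← he] at hpair
    omega
  · rw [hNset, finsum_mem_coe_finset,
      ← Finset.sum_filter_add_sum_filter_not (nbrs L) (fun m => 0 < picInter s m)]
    have hterm : ∀ m ∈ (nbrs L).filter (fun m => 0 < picInter s m), picInter m s = 1 := by
      intro m hm
      rw [Finset.mem_filter] at hm
      obtain ⟨hb1, hb2, hb3⟩ := (hbase m).mpr hm.1
      rcases hval m hb1 hb2 hb3 with h | h
      · omega
      · rw [picInter_comm]; exact h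
    have e1 : ∑ m ∈ (nbrs L).filter (fun m => 0 < picInter s m), picInter m s = 5 := by
      rw [Finset.sum_congr rfl hterm, Finset.sum_const, hP5]
      norm_num
    have e2 : ∑ m ∈ (nbrs L).filter (fun m => ¬ 0 < picInter s m), picInter m s = 0 := by
      apply Finset.sum_eq_zero
      intro m hm
      rw [Finset.mem_filter] at hm
      obtain ⟨hb1, hb2, hb3⟩ := (hbase m).mpr hm.1
      rcases hval m hb1 hb2 hb3 with h | h
      · rw [picInter_comm]; exact h
      · omega
    rw [e1, e2]
    norm_num
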